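/- arXiv:0909.3367 — 5 statements merged into one kernel-verified Lean document; each statement's English description precedes it below -/
import Mathlib

section
/- Lemma 1: Let n ≥ 1, α, β ∈ ℂ with α ≠ 0, and set λ := (α+β)/(2α) and F := α·S_5 + β·S_2·S_3 ∈ ℂ[x_0,…,x_{n+1}]. Suppose η ∈ ℂ^{n+2} satisfies S_1(η) = 0 and there exists μ ∈ ℂ with (∂F/∂x_i)(η) = μ for all i = 0,…,n+1 (i.e., η is a singular point of the hyperquintic {F = 0} in the hyperplane {S_1 = 0} ≅ ℙ^n). Then every coordinate η_i of η is a root of the quartic polynomial P(X) := X^4 − λ·C_2(η)·X^2 − (2/3)·λ·C_3(η)·X + (1/(n+2))·(λ·C_2(η)^2 − C_4(η)). -/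
open MvPolynomial Finset

namespace QuarticAux

variable {σ : Type*} [Fintype σ] [DecidableEq σ] {R : Type*} [CommRing R]

/-- Sum over `k`-subsets avoiding `i` of the products of variables. -/
noncomputable def B (R : Type*) [CommRing R] (i : σ) (k : ℕ) : MvPolynomial σ R :=
  ∑ s ∈ powersetCard k (univ.erase i), ∏ j ∈ s, X j

lemma pderiv_prod_X_of_not_mem {i : σ} {s : Finset σ} (h : i ∉ s) :
    pderiv i (∏ j ∈ s, (X j : MvPolynomial σ R)) = 0 := by
  induction s using Finset.induction_on with
  | empty => simp
  | @insert a s ha ih =>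
    rw [Finset.prod_insert ha, pderiv_mul,
      ih (fun hs => h (mem_insert_of_mem hs)),
      pderiv_X_of_ne (by rintro rfl; exact h (mem_insert_self a s))]
    ring

lemma B_zero (i : σ) : B R i 0 = 1 := by
  simp [B]

lemma pderiv_B (i : σ) (k : ℕ) : pderiv i (B R i k) = 0 := by
  rw [B, map_sum]
  refine Finset.sum_eq_zero fun s hs => pderiv_prod_X_of_not_mem ?_
  have hsub := (mem_powersetCard.mp hs).1
  exact fun hi => (notMem_erase i univ) (hsub hi)

lemma esymm_split (i : σ) (k : ℕ) :
    esymm σ R (k + 1) = B R i (k + 1) + X i * B R i k := by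
  have hu : (univ : Finset σ) = insert i (univ.erase i) :=
    (insert_erase (mem_univ i)).symm
  have hdisj : Disjoint (powersetCard (k + 1) (univ.erase i))
      ((powersetCard k (univ.erase i)).image (insert i)) := by
    rw [Finset.disjoint_left]
    intro s hs hs'
    have h1 : i ∉ s := fun hi => (notMem_erase i univ) ((mem_powersetCard.mp hs).1 hi)
    obtain ⟨t, ht, rfl⟩ := Finset.mem_image.mp hs'
    exact h1 (mem_insert_self i t)
  rw [esymm, hu, powersetCard_succ_insert (notMem_erase i univ), Finset.sum_union hdisj]
  congr 1
  rw [Finset.sum_image (fun s hs t ht hst => by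
    have hs' : i ∉ s := fun hi => (notMem_erase i univ) ((mem_powersetCard.mp hs).1 hi)
    have ht' : i ∉ t := fun hi => (notMem_erase i univ) ((mem_powersetCard.mp ht).1 hi)
    rw [← Finset.erase_insert hs', hst, Finset.erase_insert ht']), B, Finset.mul_sum]
  refine Finset.sum_congr rfl fun s hs => ?_
  have hs' : i ∉ s := fun hi => (notMem_erase i univ) ((mem_powersetCard.mp hs).1 hi)
  rw [Finset.prod_insert hs']

lemma pderiv_esymm (i : σ) (k : ℕ) :
    pderiv i (esymm σ R (k + 1)) = B R i k := by
  rw [esymm_split i k, map_add, pderiv_B, pderiv_mul, pderiv_B, pderiv_X_self]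
  ring

lemma newton2 : (2 : MvPolynomial σ R) * esymm σ R 2
    = esymm σ R 1 * psum σ R 1 - psum σ R 2 := by
  have h := mul_esymm_eq_sum σ R 2
  norm_num [Finset.sum_filter, Finset.Nat.sum_antidiagonal_eq_sum_range_succ_mk,
    Finset.sum_range_succ, esymm_zero] at h
  rw [esymm_one, psum_one]; linear_combination h

lemma newton3 : (3 : MvPolynomial σ R) * esymm σ R 3
    = psum σ R 3 - esymm σ R 1 * psum σ R 2 + esymm σ R 2 * psum σ R 1 := by
  have h := mul_esymm_eq_sum σ R 3
  norm_num [Finset.sum_filter, Finset.Nat.sum_antidiagonal_eq_sum_range_succ_mk,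
    Finset.sum_range_succ, esymm_zero] at h
  rw [esymm_one, psum_one]; linear_combination h

end QuarticAux

/-- **Lemma 1.** If `η ∈ ℂ^{n+2}` with `S₁(η) = 0` is a singular point of the
hyperquintic `{α·S₅ + β·S₂·S₃ = 0}` inside `{S₁ = 0} ≅ ℙⁿ(ℂ)` (i.e. all partial derivatives of
`F = α·S₅ + β·S₂·S₃` take a common value `μ` at `η`), where `α ≠ 0`, then every coordinate
`η i` is a root of `P(X) = X⁴ − λ·C₂(η)·X² − (2/3)·λ·C₃(η)·X + (1/(n+2))·(λ·C₂(η)² − C₄(η))`,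
with `λ = (α+β)/(2α)`. -/
theorem coords_of_singular_point_are_roots_of_quartic (n : ℕ) (hn : 1 ≤ n) (α β : ℂ)
    (hα : α ≠ 0) (η : Fin (n + 2) → ℂ)
    (hS1 : eval η (esymm (Fin (n + 2)) ℂ 1) = 0)
    (μ : ℂ)
    (hsing : ∀ i, eval η (pderiv i
      (C α * esymm (Fin (n + 2)) ℂ 5
        + C β * (esymm (Fin (n + 2)) ℂ 2 * esymm (Fin (n + 2)) ℂ 3))) = μ) :
    ∀ i, (η i) ^ 4
        - (α + β) / (2 * α) * eval η (psum (Fin (n + 2)) ℂ 2) * (η i) ^ 2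
        - 2 / 3 * ((α + β) / (2 * α)) * eval η (psum (Fin (n + 2)) ℂ 3) * (η i)
        + 1 / ((n : ℂ) + 2) *
            ((α + β) / (2 * α) * (eval η (psum (Fin (n + 2)) ℂ 2)) ^ 2
              - eval η (psum (Fin (n + 2)) ℂ 4)) = 0 := by
  classical
  have hN : ((n : ℂ) + 2) ≠ 0 := by
    have h' : ((n + 2 : ℕ) : ℂ) ≠ 0 := Nat.cast_ne_zero.mpr (by omega)
    push_cast at h'
    exact h'
  -- power sums evaluated
  have hpsum : ∀ k, eval η (psum (Fin (n + 2)) ℂ k) = ∑ j, (η j) ^ k := by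
    intro k
    simp [psum]
  -- sum of coordinates is zero
  have hs1 : (∑ j, η j) = 0 := by
    have h := hS1
    rw [esymm_one] at h
    simpa using h
  -- abbreviations
  set E2 : ℂ := eval η (esymm (Fin (n + 2)) ℂ 2) with hE2def
  set E3 : ℂ := eval η (esymm (Fin (n + 2)) ℂ 3) with hE3def
  set E4 : ℂ := eval η (esymm (Fin (n + 2)) ℂ 4) with hE4def
  -- Newton identities evaluated
  have hE2c : 2 * E2 = -(∑ j, (η j) ^ 2) := by
    have h := congrArg (eval η) (QuarticAux.newton2 (σ := Fin (n + 2)) (R := ℂ))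
    simp only [map_mul, map_sub, map_ofNat, hpsum] at h
    rw [hS1] at h
    rw [hE2def]
    linear_combination h
  have hE3c : 3 * E3 = (∑ j, (η j) ^ 3) := by
    have h := congrArg (eval η) (QuarticAux.newton3 (σ := Fin (n + 2)) (R := ℂ))
    simp only [map_mul, map_sub, map_add, map_ofNat, hpsum] at h
    rw [hS1] at h
    have h1 : (∑ j, (η j) ^ 1) = 0 := by simpa using hs1
    rw [h1] at h
    rw [hE3def]
    linear_combination h
  -- evaluate the splitting recurrence
  have hsplit : ∀ (j : Fin (n + 2)) (k : ℕ),
      eval η (esymm (Fin (n + 2)) ℂ (k + 1))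
        = eval η (QuarticAux.B ℂ j (k + 1)) + η j * eval η (QuarticAux.B ℂ j k) := by
    intro j k
    have h := congrArg (eval η) (QuarticAux.esymm_split (R := ℂ) j k)
    simpa using h
  have hd0 : ∀ j : Fin (n + 2), eval η (QuarticAux.B ℂ j 0) = 1 := by
    intro j; rw [QuarticAux.B_zero]; simp
  have hd1 : ∀ j : Fin (n + 2), eval η (QuarticAux.B ℂ j 1) = -η j := by
    intro j
    have h := hsplit j 0
    rw [hd0 j] at h
    have h1 : eval η (esymm (Fin (n + 2)) ℂ (0 + 1)) = 0 := by
      rw [show (0 + 1 : ℕ) = 1 from rfl]; exact hS1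
    rw [h1] at h
    linear_combination -h
  have hd2 : ∀ j : Fin (n + 2), eval η (QuarticAux.B ℂ j 2) = E2 + (η j) ^ 2 := by
    intro j
    have h := hsplit j 1
    norm_num at h
    rw [hd1 j] at h
    rw [hE2def]
    linear_combination -h
  have hd3 : ∀ j : Fin (n + 2), eval η (QuarticAux.B ℂ j 3)
      = E3 - η j * E2 - (η j) ^ 3 := by
    intro j
    have h := hsplit j 2
    norm_num at h
    rw [hd2 j] at h
    rw [hE3def]
    linear_combination -h
  have hd4 : ∀ j : Fin (n + 2), eval η (QuarticAux.B ℂ j 4)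
      = E4 - η j * E3 + (η j) ^ 2 * E2 + (η j) ^ 4 := by
    intro j
    have h := hsplit j 3
    norm_num at h
    rw [hd3 j] at h
    rw [hE4def]
    linear_combination -h
  -- the per-coordinate singularity condition
  have hq : ∀ j : Fin (n + 2),
      α * (η j) ^ 4 + (α + β) * E2 * (η j) ^ 2 - (α + β) * E3 * (η j)
        + (α * E4 + β * E2 ^ 2) = μ := by
    intro j
    have h := hsing j
    have e5 : pderiv j (esymm (Fin (n + 2)) ℂ 5) = QuarticAux.B ℂ j 4 :=
      QuarticAux.pderiv_esymm j 4
    have e3 : pderiv j (esymm (Fin (n + 2)) ℂ 3) = QuarticAux.B ℂ j 2 :=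
      QuarticAux.pderiv_esymm j 2
    have e2 : pderiv j (esymm (Fin (n + 2)) ℂ 2) = QuarticAux.B ℂ j 1 :=
      QuarticAux.pderiv_esymm j 1
    rw [map_add, pderiv_C_mul, pderiv_C_mul, pderiv_mul, e5, e3, e2] at h
    simp only [eval_add, eval_mul, eval_C] at h
    rw [hd4 j, hd1 j, hd2 j] at h
    linear_combination h
  -- sum the per-coordinate conditions
  have hsum : α * (∑ j, (η j) ^ 4) + (α + β) * E2 * (∑ j, (η j) ^ 2)
      - (α + β) * E3 * (∑ j, η j)
      + ((n : ℂ) + 2) * (α * E4 + β * E2 ^ 2) = ((n : ℂ) + 2) * μ := by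
    have h : ∑ j : Fin (n + 2), (α * (η j) ^ 4 + (α + β) * E2 * (η j) ^ 2
        - (α + β) * E3 * (η j) + (α * E4 + β * E2 ^ 2))
        = ∑ _j : Fin (n + 2), μ := Finset.sum_congr rfl fun j _ => hq j
    simp only [Finset.sum_add_distrib, Finset.sum_sub_distrib, ← Finset.mul_sum,
      Finset.sum_const, Finset.card_univ, Fintype.card_fin, nsmul_eq_mul] at h
    push_cast at h
    linear_combination h
  intro i
  rw [hpsum 2, hpsum 3, hpsum 4]
  have key : α * ((n : ℂ) + 2) * (η i) ^ 4
      + (α + β) * E2 * ((n : ℂ) + 2) * (η i) ^ 2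
      - (α + β) * E3 * ((n : ℂ) + 2) * (η i)
      - α * (∑ j, (η j) ^ 4) - (α + β) * E2 * (∑ j, (η j) ^ 2)
      + (α + β) * E3 * (∑ j, η j) = 0 := by
    linear_combination ((n : ℂ) + 2) * hq i - hsum
  have key2 : 6 * α * ((n : ℂ) + 2) * (η i) ^ 4
      - 3 * ((n : ℂ) + 2) * (α + β) * (∑ j, (η j) ^ 2) * (η i) ^ 2
      - 2 * ((n : ℂ) + 2) * (α + β) * (∑ j, (η j) ^ 3) * (η i)
      - 6 * α * (∑ j, (η j) ^ 4) + 3 * (α + β) * (∑ j, (η j) ^ 2) ^ 2 = 0 := by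
    linear_combination 6 * key
      + (3 * (α + β) * (∑ j, (η j) ^ 2) - 3 * ((n : ℂ) + 2) * (α + β) * (η i) ^ 2) * hE2c
      + 2 * ((n : ℂ) + 2) * (α + β) * (η i) * hE3c
      - 6 * (α + β) * E3 * hs1
  have h2α : (2 : ℂ) * α ≠ 0 := mul_ne_zero two_ne_zero hα
  have hq2α : (α + β) / (2 * α) * (2 * α) = α + β := div_mul_cancel₀ _ h2α
  have hrN : ((n : ℂ) + 2) * ((n : ℂ) + 2)⁻¹ = 1 := mul_inv_cancel₀ hN
  have key3 : (6 * α * ((n : ℂ) + 2)) *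
      ((η i) ^ 4
        - (α + β) / (2 * α) * (∑ j, (η j) ^ 2) * (η i) ^ 2
        - 2 / 3 * ((α + β) / (2 * α)) * (∑ j, (η j) ^ 3) * (η i)
        + 1 / ((n : ℂ) + 2) *
            ((α + β) / (2 * α) * (∑ j, (η j) ^ 2) ^ 2 - ∑ j, (η j) ^ 4)) = 0 := by
    linear_combination key2
      + (-3 * ((n : ℂ) + 2) * (∑ j, (η j) ^ 2) * (η i) ^ 2
          - 2 * ((n : ℂ) + 2) * (∑ j, (η j) ^ 3) * (η i)
          + 3 * ((n : ℂ) + 2) * ((n : ℂ) + 2)⁻¹ * (∑ j, (η j) ^ 2) ^ 2) * hq2α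
      + (3 * (α + β) * (∑ j, (η j) ^ 2) ^ 2 - 6 * α * (∑ j, (η j) ^ 4)) * hrN
  rcases mul_eq_zero.mp key3 with h | h
  · exact absurd h (by
      refine mul_ne_zero (mul_ne_zero ?_ hα) hN
      norm_num)
  · linear_combination h
end

section
/- (Generic singularities, Case 18) Let α, β, c ∈ ℂ satisfy β·c^2 + (3α + 4β) = 0. Then the point η := (1,1,1,1,−1,−1,−1,−1,c,−c) ∈ ℂ^{10} satisfies S_1(η) = 0 and there exists μ ∈ ℂ with (∂F_{α,β}/∂x_i)(η) = μ for all i = 0,…,9; that is, η is a singular point of the hyperquintic Q_{(α:β)} in ℙ^8(ℂ). -/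
open MvPolynomial

private noncomputable def esum (η : Fin 10 → ℂ) (s : Finset (Fin 10)) (k : ℕ) : ℂ :=
  ∑ t ∈ s.powersetCard k, ∏ j ∈ t, η j

private lemma esum_zero (η : Fin 10 → ℂ) (s : Finset (Fin 10)) : esum η s 0 = 1 := by
  simp [esum]

private lemma esum_empty (η : Fin 10 → ℂ) (k : ℕ) : esum η ∅ (k + 1) = 0 := by
  rw [esum, Finset.powersetCard_eq_empty.mpr (by simp), Finset.sum_empty]

private lemma aux_disj {i : Fin 10} {s : Finset (Fin 10)} (h : i ∉ s) (k : ℕ) :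
    Disjoint (Finset.powersetCard (k + 1) s)
      ((Finset.powersetCard k s).image (insert i)) := by
  rw [Finset.disjoint_left]
  intro t ht htimg
  obtain ⟨u, _, rfl⟩ := Finset.mem_image.mp htimg
  exact h ((Finset.mem_powersetCard.mp ht).1 (Finset.mem_insert_self i u))

private lemma aux_inj {i : Fin 10} {s : Finset (Fin 10)} (h : i ∉ s) (k : ℕ) :
    ∀ a ∈ Finset.powersetCard k s, ∀ b ∈ Finset.powersetCard k s,
      insert i a = insert i b → a = b := by
  intro a ha b hb hab
  have hai : i ∉ a := fun hh => h ((Finset.mem_powersetCard.mp ha).1 hh)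
  have hbi : i ∉ b := fun hh => h ((Finset.mem_powersetCard.mp hb).1 hh)
  rw [← Finset.erase_insert hai, ← Finset.erase_insert hbi, hab]

private lemma esum_insert (η : Fin 10 → ℂ) {i : Fin 10} {s : Finset (Fin 10)}
    (h : i ∉ s) (k : ℕ) :
    esum η (insert i s) (k + 1) = esum η s (k + 1) + η i * esum η s k := by
  unfold esum
  rw [Finset.powersetCard_succ_insert h, Finset.sum_union (aux_disj h k),
    Finset.sum_image (aux_inj h k), Finset.mul_sum]
  congr 1
  refine Finset.sum_congr rfl fun t ht => ?_
  rw [Finset.prod_insert (fun hit => h ((Finset.mem_powersetCard.mp ht).1 hit))]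

private lemma pderiv_prod_X {i : Fin 10} {t : Finset (Fin 10)} (h : i ∉ t) :
    pderiv i (∏ j ∈ t, (X j : MvPolynomial (Fin 10) ℂ)) = 0 := by
  induction t using Finset.induction_on with
  | empty => simp
  | @insert a s ha ih =>
    rw [Finset.prod_insert ha, pderiv_mul,
      pderiv_X_of_ne (by rintro rfl; exact h (Finset.mem_insert_self a s)),
      ih (fun hh => h (Finset.mem_insert_of_mem hh))]
    ring

private lemma eval_pderiv_esymm (η : Fin 10 → ℂ) (i : Fin 10) (k : ℕ) :
    eval η (pderiv i (esymm (Fin 10) ℂ (k + 1))) = esum η (Finset.univ.erase i) k := by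
  have hni : i ∉ Finset.univ.erase i := Finset.notMem_erase i _
  have hu : (Finset.univ : Finset (Fin 10)) = insert i (Finset.univ.erase i) :=
    (Finset.insert_erase (Finset.mem_univ i)).symm
  rw [esymm, hu, Finset.powersetCard_succ_insert hni, Finset.sum_union (aux_disj hni k),
    map_add, map_add]
  have h1 : pderiv i (∑ t ∈ Finset.powersetCard (k + 1) (Finset.univ.erase i),
      ∏ j ∈ t, (X j : MvPolynomial (Fin 10) ℂ)) = 0 := by
    rw [map_sum]
    refine Finset.sum_eq_zero fun t ht => ?_
    exact pderiv_prod_X (fun hh => hni ((Finset.mem_powersetCard.mp ht).1 hh))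
  have h2 : pderiv i (∑ t ∈ (Finset.powersetCard k (Finset.univ.erase i)).image (insert i),
      ∏ j ∈ t, (X j : MvPolynomial (Fin 10) ℂ)) =
      ∑ t ∈ Finset.powersetCard k (Finset.univ.erase i), ∏ j ∈ t, X j := by
    rw [Finset.sum_image (aux_inj hni k), map_sum]
    refine Finset.sum_congr rfl fun t ht => ?_
    have hit : i ∉ t := fun hh => hni ((Finset.mem_powersetCard.mp ht).1 hh)
    rw [Finset.prod_insert hit, pderiv_mul, pderiv_X_self, pderiv_prod_X hit]
    ring
  rw [h1, h2, map_zero, zero_add]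
  simp [esum, eval_prod]

private lemma eval_pderiv_esymm5 (η : Fin 10 → ℂ) (i : Fin 10) :
    eval η (pderiv i (esymm (Fin 10) ℂ 5)) = esum η (Finset.univ.erase i) 4 :=
  eval_pderiv_esymm η i 4

private lemma eval_pderiv_esymm3 (η : Fin 10 → ℂ) (i : Fin 10) :
    eval η (pderiv i (esymm (Fin 10) ℂ 3)) = esum η (Finset.univ.erase i) 2 :=
  eval_pderiv_esymm η i 2

private lemma eval_pderiv_esymm2 (η : Fin 10 → ℂ) (i : Fin 10) :
    eval η (pderiv i (esymm (Fin 10) ℂ 2)) = esum η (Finset.univ.erase i) 1 :=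
  eval_pderiv_esymm η i 1

private lemma eval_esymm' (η : Fin 10 → ℂ) (k : ℕ) :
    eval η (esymm (Fin 10) ℂ k) = esum η Finset.univ k := by
  rw [esymm]
  simp [esum, eval_prod]

private noncomputable def esl (η : Fin 10 → ℂ) : List (Fin 10) → ℕ → ℂ
  | _, 0 => 1
  | [], _ + 1 => 0
  | a :: l, k + 1 => esl η l (k + 1) + η a * esl η l k

private lemma esum_eq_esl (η : Fin 10 → ℂ) :
    ∀ (l : List (Fin 10)), l.Nodup → ∀ k, esum η l.toFinset k = esl η l k
  | [], _, 0 => by simp [esum_zero, esl]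
  | [], _, (k + 1) => by simpa [esl] using esum_empty η k
  | a :: l, _, 0 => by simp [esum_zero, esl]
  | a :: l, h, (k + 1) => by
    have hal : a ∉ l.toFinset := by
      simpa using (List.nodup_cons.mp h).1
    rw [List.toFinset_cons, esum_insert η hal k, esl,
      esum_eq_esl η l (List.nodup_cons.mp h).2 (k + 1),
      esum_eq_esl η l (List.nodup_cons.mp h).2 k]

/-- **Case 18, generic singularities.** If `β·c² + (3α + 4β) = 0`, then the point
`η = (1,1,1,1,−1,−1,−1,−1,c,−c)` satisfies `S₁(η) = 0` and is a singular point of the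
hyperquintic `Q_{(α:β)} = {α·S₅ + β·S₂·S₃ = 0}` in `ℙ⁸(ℂ)`. -/
theorem case18_generic_singularity (α β c : ℂ)
    (hc : β * c ^ 2 + (3 * α + 4 * β) = 0) (η : Fin 10 → ℂ)
    (hη : η = ![1, 1, 1, 1, -1, -1, -1, -1, c, -c]) :
    eval η (esymm (Fin 10) ℂ 1) = 0 ∧
    ∃ μ : ℂ, ∀ i, eval η (pderiv i
      (C α * esymm (Fin 10) ℂ 5 + C β * (esymm (Fin 10) ℂ 2 * esymm (Fin 10) ℂ 3))) = μ := by
  subst hη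
  set η : Fin 10 → ℂ := ![1, 1, 1, 1, -1, -1, -1, -1, c, -c] with hη
  -- the full elementary symmetric values
  have huniv : (Finset.univ : Finset (Fin 10)) =
      ([0, 1, 2, 3, 4, 5, 6, 7, 8, 9] : List (Fin 10)).toFinset := by decide
  have hesl : ∀ k, esum η Finset.univ k = esl η [0, 1, 2, 3, 4, 5, 6, 7, 8, 9] k := by
    intro k
    rw [huniv, esum_eq_esl η _ (by decide)]
  have e0 : η 0 = 1 := rfl
  have e1 : η 1 = 1 := rfl
  have e2 : η 2 = 1 := rfl
  have e3 : η 3 = 1 := rfl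
  have e4 : η 4 = -1 := rfl
  have e5 : η 5 = -1 := rfl
  have e6 : η 6 = -1 := rfl
  have e7 : η 7 = -1 := rfl
  have e8 : η 8 = c := rfl
  have e9 : η 9 = -c := rfl
  have hA1 : esum η Finset.univ 1 = 0 := by
    rw [hesl]; simp only [esl, e0, e1, e2, e3, e4, e5, e6, e7, e8, e9]; ring
  have hA2 : esum η Finset.univ 2 = -(4 + c ^ 2) := by
    rw [hesl]; simp only [esl, e0, e1, e2, e3, e4, e5, e6, e7, e8, e9]; ring
  have hA3 : esum η Finset.univ 3 = 0 := by
    rw [hesl]; simp only [esl, e0, e1, e2, e3, e4, e5, e6, e7, e8, e9]; ring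
  have hA4 : esum η Finset.univ 4 = 6 + 4 * c ^ 2 := by
    rw [hesl]; simp only [esl, e0, e1, e2, e3, e4, e5, e6, e7, e8, e9]; ring
  constructor
  · rw [eval_esymm', hA1]
  · refine ⟨-6 * α, fun i => ?_⟩
    have h4 : η i = 1 ∨ η i = -1 ∨ η i = c ∨ η i = -c := by
      fin_cases i
      exacts [Or.inl rfl, Or.inl rfl, Or.inl rfl, Or.inl rfl,
        Or.inr (Or.inl rfl), Or.inr (Or.inl rfl), Or.inr (Or.inl rfl), Or.inr (Or.inl rfl),
        Or.inr (Or.inr (Or.inl rfl)), Or.inr (Or.inr (Or.inr rfl))]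
    have hv : (η i) ^ 2 = 1 ∨ (η i) ^ 2 = c ^ 2 := by
      rcases h4 with h | h | h | h <;> rw [h] <;> [left; left; right; right] <;> ring
    -- recurrences relating erased esymms to full ones
    have hr : ∀ k, esum η Finset.univ (k + 1) =
        esum η (Finset.univ.erase i) (k + 1) + η i * esum η (Finset.univ.erase i) k := by
      intro k
      have := esum_insert η (Finset.notMem_erase i Finset.univ) k
      rwa [Finset.insert_erase (Finset.mem_univ i)] at this
    have r1 : esum η Finset.univ 1 =
        esum η (Finset.univ.erase i) 1 + η i * esum η (Finset.univ.erase i) 0 := hr 0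
    have r2 : esum η Finset.univ 2 =
        esum η (Finset.univ.erase i) 2 + η i * esum η (Finset.univ.erase i) 1 := hr 1
    have r3 : esum η Finset.univ 3 =
        esum η (Finset.univ.erase i) 3 + η i * esum η (Finset.univ.erase i) 2 := hr 2
    have r4 : esum η Finset.univ 4 =
        esum η (Finset.univ.erase i) 4 + η i * esum η (Finset.univ.erase i) 3 := hr 3
    have hB0 : esum η (Finset.univ.erase i) 0 = 1 := esum_zero η _
    have hB1 : esum η (Finset.univ.erase i) 1 = -(η i) := by
      rw [hB0] at r1; linear_combination hA1 - r1
    have hB2 : esum η (Finset.univ.erase i) 2 = -(4 + c ^ 2) + (η i) ^ 2 := by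
      rw [hB1] at r2; linear_combination hA2 - r2
    have hB3 : esum η (Finset.univ.erase i) 3 = (η i) * (4 + c ^ 2) - (η i) ^ 3 := by
      rw [hB2] at r3; linear_combination hA3 - r3
    have hB4 : esum η (Finset.univ.erase i) 4 =
        6 + 4 * c ^ 2 - (η i) ^ 2 * (4 + c ^ 2) + (η i) ^ 4 := by
      rw [hB3] at r4; linear_combination hA4 - r4
    rw [map_add, pderiv_C_mul, pderiv_C_mul, pderiv_mul, map_add, map_mul, map_mul, eval_C,
      eval_C, map_add, map_mul, map_mul, eval_pderiv_esymm5, eval_pderiv_esymm2,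
      eval_pderiv_esymm3, eval_esymm', eval_esymm', hA2, hA3, hB1, hB2, hB4]
    rcases hv with h | h
    · linear_combination (c ^ 2 + 3) * hc + (α * ((η i) ^ 2 + 1) - (α + β) * (4 + c ^ 2)) * h
    · linear_combination 4 * hc + (α * ((η i) ^ 2 + c ^ 2) - (α + β) * (4 + c ^ 2)) * h
end

section
/- (Case 5) Let α, β ∈ ℂ with (α, β) ≠ (0, 0), and let η := (3,3,3,3,3,3,3,−7,−7,−7) ∈ ℂ^{10}. Then there exists μ ∈ ℂ with (∂F_{α,β}/∂x_i)(η) = μ for all i = 0,…,9 if and only if 117α + 175β = 0; that is, η is a singular point of the hyperquintic Q_{(α:β)} exactly for (α : β) = (175 : −117). -/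
set_option maxRecDepth 20000

open MvPolynomial

open Finset in
private lemma pderiv_prod_X_of_not_mem {i : Fin 10} {A : Finset (Fin 10)} (h : i ∉ A) :
    pderiv i (∏ j ∈ A, (X j : MvPolynomial (Fin 10) ℂ)) = 0 := by
  induction A using Finset.induction with
  | empty => simp
  | @insert a s ha ih =>
    rw [Finset.prod_insert ha, pderiv_mul,
      ih (fun hm => h (Finset.mem_insert_of_mem hm)),
      pderiv_X_of_ne (by rintro rfl; exact h (Finset.mem_insert_self _ _))]
    ring

open Finset in
private lemma pderiv_esymm_eq (i : Fin 10) (n : ℕ) :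
    pderiv i (esymm (Fin 10) ℂ (n + 1)) =
      ∑ B ∈ (Finset.univ.erase i).powersetCard n, ∏ j ∈ B, X j := by
  have hu : (Finset.univ : Finset (Fin 10)) = insert i (Finset.univ.erase i) := by
    rw [Finset.insert_erase (Finset.mem_univ i)]
  have hdisj : Disjoint ((Finset.univ.erase i).powersetCard (n + 1))
      (((Finset.univ.erase i).powersetCard n).image (insert i)) := by
    rw [Finset.disjoint_left]
    intro A hA hA'
    rw [Finset.mem_powersetCard] at hA
    obtain ⟨B, hB, rfl⟩ := Finset.mem_image.mp hA'
    exact (Finset.notMem_erase i _) (hA.1 (Finset.mem_insert_self i B))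
  rw [esymm, hu, Finset.powersetCard_succ_insert (Finset.notMem_erase i _),
    Finset.sum_union hdisj, map_add]
  have h1 : pderiv i (∑ A ∈ (Finset.univ.erase i).powersetCard (n + 1),
      ∏ j ∈ A, (X j : MvPolynomial (Fin 10) ℂ)) = 0 := by
    rw [map_sum]
    refine Finset.sum_eq_zero fun A hA => ?_
    rw [Finset.mem_powersetCard] at hA
    exact pderiv_prod_X_of_not_mem (fun hi => (Finset.notMem_erase i _) (hA.1 hi))
  have h2 : pderiv i (∑ A ∈ ((Finset.univ.erase i).powersetCard n).image (insert i),
      ∏ j ∈ A, (X j : MvPolynomial (Fin 10) ℂ)) =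
      ∑ B ∈ (Finset.univ.erase i).powersetCard n, ∏ j ∈ B, X j := by
    rw [Finset.sum_image ?hinj]
    case hinj =>
      intro B hB B' hB' hBB
      rw [Finset.mem_coe, Finset.mem_powersetCard] at hB hB'
      have hiB : i ∉ B := fun hi => (Finset.notMem_erase i _) (hB.1 hi)
      have hiB' : i ∉ B' := fun hi => (Finset.notMem_erase i _) (hB'.1 hi)
      have := congrArg (Finset.erase · i) hBB
      simpa [Finset.erase_insert hiB, Finset.erase_insert hiB'] using this
    rw [map_sum]
    refine Finset.sum_congr rfl fun B hB => ?_
    rw [Finset.mem_powersetCard] at hB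
    have hiB : i ∉ B := fun hi => (Finset.notMem_erase i _) (hB.1 hi)
    rw [Finset.prod_insert hiB, pderiv_mul, pderiv_X_self,
      pderiv_prod_X_of_not_mem hiB]
    ring
  rw [h1, h2, zero_add, ← hu]

private def ι : Fin 10 → ℤ := ![3, 3, 3, 3, 3, 3, 3, -7, -7, -7]

private lemma eval_pderiv_esymm_s8 (i : Fin 10) (n : ℕ) {v : ℤ}
    (h : ∑ B ∈ (Finset.univ.erase i).powersetCard n, ∏ j ∈ B, ι j = v) :
    eval (fun j => (ι j : ℂ)) (pderiv i (esymm (Fin 10) ℂ (n + 1))) = (v : ℂ) := by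
  rw [pderiv_esymm_eq, ← h]
  push_cast
  simp

private lemma eval_esymm (n : ℕ) {v : ℤ}
    (h : ∑ B ∈ (Finset.univ : Finset (Fin 10)).powersetCard n, ∏ j ∈ B, ι j = v) :
    eval (fun j => (ι j : ℂ)) (esymm (Fin 10) ℂ n) = (v : ℂ) := by
  rw [esymm, ← h]
  push_cast
  simp

/-- **Case 5.** For `(α, β) ≠ (0, 0)`, the point `η = (3,…,3,−7,−7,−7)` is a
singular point of the hyperquintic `Q_{(α:β)} = {α·S₅ + β·S₂·S₃ = 0}` in `ℙ⁸(ℂ)` if and only if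
`117α + 175β = 0`, i.e. exactly for `(α : β) = (175 : −117)`. -/
theorem case5_singular_iff (α β : ℂ) (hαβ : (α, β) ≠ (0, 0)) (η : Fin 10 → ℂ)
    (hη : η = ![3, 3, 3, 3, 3, 3, 3, -7, -7, -7]) :
    (∃ μ : ℂ, ∀ i, eval η (pderiv i
        (C α * esymm (Fin 10) ℂ 5 + C β * (esymm (Fin 10) ℂ 2 * esymm (Fin 10) ℂ 3))) = μ)
      ↔ 117 * α + 175 * β = 0 := by
  have hηι : η = fun j => (ι j : ℂ) := by
    rw [hη]; funext j; fin_cases j <;> norm_num [ι, Matrix.cons_val_succ]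
  have he2 : eval η (esymm (Fin 10) ℂ 2) = (-105 : ℂ) := by
    rw [hηι]; exact_mod_cast eval_esymm 2 (by decide)
  have he3 : eval η (esymm (Fin 10) ℂ 3) = (-280 : ℂ) := by
    rw [hηι]; exact_mod_cast eval_esymm 3 (by decide)
  have key : ∀ i : Fin 10, eval η (pderiv i
      (C α * esymm (Fin 10) ℂ 5 + C β * (esymm (Fin 10) ℂ 2 * esymm (Fin 10) ℂ 3))) =
      if (i : ℕ) < 7 then 3546 * α + 10920 * β else -1134 * α + 3920 * β := by
    intro i
    have expand : eval η (pderiv i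
        (C α * esymm (Fin 10) ℂ 5 + C β * (esymm (Fin 10) ℂ 2 * esymm (Fin 10) ℂ 3))) =
        α * eval η (pderiv i (esymm (Fin 10) ℂ 5)) +
        β * (eval η (pderiv i (esymm (Fin 10) ℂ 2)) * eval η (esymm (Fin 10) ℂ 3) +
             eval η (esymm (Fin 10) ℂ 2) * eval η (pderiv i (esymm (Fin 10) ℂ 3))) := by
      rw [map_add, pderiv_C_mul, pderiv_C_mul, pderiv_mul]
      simp only [map_add, map_mul, eval_C]
    rw [expand, he2, he3]
    have h4 := fun v h => hηι ▸ eval_pderiv_esymm_s8 i 4 (v := v) h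
    have h1 := fun v h => hηι ▸ eval_pderiv_esymm_s8 i 1 (v := v) h
    have h2 := fun v h => hηι ▸ eval_pderiv_esymm_s8 i 2 (v := v) h
    fin_cases i <;>
      simp only [show ((5:ℕ)) = 4 + 1 from rfl, show ((2:ℕ)) = 1 + 1 from rfl,
        show ((3:ℕ)) = 2 + 1 from rfl] <;>
      first
      | (rw [h4 3546 (by decide), h1 (-3) (by decide), h2 (-96) (by decide)]; push_cast; ring)
      | (rw [h4 (-1134) (by decide), h1 7 (by decide), h2 (-56) (by decide)]; push_cast; ring)
  constructor
  · rintro ⟨μ, hμ⟩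
    have h0 := hμ 0
    have h7 := hμ 7
    rw [key 0, if_pos (by decide)] at h0
    rw [key 7, if_neg (by decide)] at h7
    linear_combination (1 / 40 : ℂ) * (h0.trans h7.symm)
  · intro h
    refine ⟨3546 * α + 10920 * β, fun i => ?_⟩
    rw [key i]
    split
    · rfl
    · linear_combination (-40 : ℂ) * h
end

section
/- (Case 8) Let α, β ∈ ℂ with (α, β) ≠ (0, 0), and let η := (2,2,2,2,2,2,−3,−3,−3,−3) ∈ ℂ^{10}. Then there exists μ ∈ ℂ with (∂F_{α,β}/∂x_i)(η) = μ for all i = 0,…,9 if and only if 37α + 50β = 0; that is, η is a singular point of the hyperquintic Q_{(α:β)} exactly for (α : β) = (50 : −37). -/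
set_option linter.unusedVariables false


open MvPolynomial Finset

private lemma pderiv_psum10 (i : Fin 10) (k : ℕ) :
    pderiv i (psum (Fin 10) ℂ k) = (k : MvPolynomial (Fin 10) ℂ) * X i ^ (k - 1) := by
  classical
  rw [psum, map_sum, Finset.sum_eq_single i]
  · rw [pderiv_pow, pderiv_X_self, mul_one]
  · intro j _ hj
    rw [pderiv_pow, pderiv_X_of_ne hj, mul_zero]
  · simp

private lemma pderiv_ofNat10 (i : Fin 10) (n : ℕ) [n.AtLeastTwo] :
    pderiv i (OfNat.ofNat n : MvPolynomial (Fin 10) ℂ) = 0 := by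
  rw [← map_ofNat (C : ℂ →+* MvPolynomial (Fin 10) ℂ) n]; exact pderiv_C

set_option maxHeartbeats 1000000 in
private lemma case8_key (α β : ℂ) (η : Fin 10 → ℂ)
    (hη : η = ![2, 2, 2, 2, 2, 2, -3, -3, -3, -3]) (i : Fin 10) :
    eval η (pderiv i
        (C α * esymm (Fin 10) ℂ 5 + C β * (esymm (Fin 10) ℂ 2 * esymm (Fin 10) ℂ 3)))
      = α * (345 + 20 * η i - 30 * η i ^ 2 + η i ^ 4)
        + β * (900 + 20 * η i - 30 * η i ^ 2) := by
  -- Newton polynomial identities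
  have hN1 : esymm (Fin 10) ℂ 1 = psum (Fin 10) ℂ 1 := by rw [esymm_one, psum_one]
  have hN2 : (2 : MvPolynomial (Fin 10) ℂ) * esymm (Fin 10) ℂ 2
      = esymm (Fin 10) ℂ 1 * psum (Fin 10) ℂ 1 - psum (Fin 10) ℂ 2 := by
    have h := mul_esymm_eq_sum (Fin 10) ℂ 2
    rw [show ({a ∈ antidiagonal 2 | a.1 < 2} : Finset (ℕ×ℕ)) = {(0,2),(1,1)} by decide,
      Finset.sum_pair (by decide), esymm_zero] at h
    push_cast at h
    linear_combination h
  have hN3 : (3 : MvPolynomial (Fin 10) ℂ) * esymm (Fin 10) ℂ 3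
      = esymm (Fin 10) ℂ 2 * psum (Fin 10) ℂ 1 - esymm (Fin 10) ℂ 1 * psum (Fin 10) ℂ 2
        + psum (Fin 10) ℂ 3 := by
    have h := mul_esymm_eq_sum (Fin 10) ℂ 3
    rw [show ({a ∈ antidiagonal 3 | a.1 < 3} : Finset (ℕ×ℕ)) = {(0,3),(1,2),(2,1)} by decide,
      Finset.sum_insert (by decide), Finset.sum_pair (by decide), esymm_zero] at h
    push_cast at h
    linear_combination h
  have hN4 : (4 : MvPolynomial (Fin 10) ℂ) * esymm (Fin 10) ℂ 4
      = esymm (Fin 10) ℂ 3 * psum (Fin 10) ℂ 1 - esymm (Fin 10) ℂ 2 * psum (Fin 10) ℂ 2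
        + esymm (Fin 10) ℂ 1 * psum (Fin 10) ℂ 3 - psum (Fin 10) ℂ 4 := by
    have h := mul_esymm_eq_sum (Fin 10) ℂ 4
    rw [show ({a ∈ antidiagonal 4 | a.1 < 4} : Finset (ℕ×ℕ))
        = {(0,4),(1,3),(2,2),(3,1)} by decide,
      Finset.sum_insert (by decide), Finset.sum_insert (by decide),
      Finset.sum_pair (by decide), esymm_zero] at h
    push_cast at h
    linear_combination h
  have hN5 : (5 : MvPolynomial (Fin 10) ℂ) * esymm (Fin 10) ℂ 5
      = esymm (Fin 10) ℂ 4 * psum (Fin 10) ℂ 1 - esymm (Fin 10) ℂ 3 * psum (Fin 10) ℂ 2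
        + esymm (Fin 10) ℂ 2 * psum (Fin 10) ℂ 3 - esymm (Fin 10) ℂ 1 * psum (Fin 10) ℂ 4
        + psum (Fin 10) ℂ 5 := by
    have h := mul_esymm_eq_sum (Fin 10) ℂ 5
    rw [show ({a ∈ antidiagonal 5 | a.1 < 5} : Finset (ℕ×ℕ))
        = {(0,5),(1,4),(2,3),(3,2),(4,1)} by decide,
      Finset.sum_insert (by decide), Finset.sum_insert (by decide),
      Finset.sum_insert (by decide), Finset.sum_pair (by decide), esymm_zero] at h
    push_cast at h
    linear_combination h
  -- power sum values
  have hp : ∀ k : ℕ, eval η (psum (Fin 10) ℂ k) = 6 * 2 ^ k + 4 * (-3 : ℂ) ^ k := by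
    intro k
    subst hη
    simp [psum, map_sum, Fin.sum_univ_succ]
    ring
  have hp1 : eval η (psum (Fin 10) ℂ 1) = 0 := by rw [hp]; norm_num
  have hp2 : eval η (psum (Fin 10) ℂ 2) = 60 := by rw [hp]; norm_num
  have hp3 : eval η (psum (Fin 10) ℂ 3) = -60 := by rw [hp]; norm_num
  have hp4 : eval η (psum (Fin 10) ℂ 4) = 420 := by rw [hp]; norm_num
  have hp5 : eval η (psum (Fin 10) ℂ 5) = -780 := by rw [hp]; norm_num
  -- esymm values
  have hE1 : eval η (esymm (Fin 10) ℂ 1) = 0 := by rw [hN1]; exact hp1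
  have hE2 : eval η (esymm (Fin 10) ℂ 2) = -30 := by
    have h := congrArg (eval η) hN2
    simp only [map_mul, map_sub, map_ofNat, hE1, hp1, hp2] at h
    linear_combination h / 2
  have hE3 : eval η (esymm (Fin 10) ℂ 3) = -20 := by
    have h := congrArg (eval η) hN3
    simp only [map_mul, map_sub, map_add, map_ofNat, hE1, hE2, hp1, hp2, hp3] at h
    linear_combination h / 3
  have hE4 : eval η (esymm (Fin 10) ℂ 4) = 345 := by
    have h := congrArg (eval η) hN4
    simp only [map_mul, map_sub, map_add, map_ofNat, hE1, hE2, hE3, hp1, hp2, hp3, hp4] at h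
    linear_combination h / 4
  -- derivatives of power sums
  have hdp : ∀ k : ℕ, eval η (pderiv i (psum (Fin 10) ℂ k)) = k * η i ^ (k - 1) := by
    intro k
    rw [pderiv_psum10]
    simp [eval_pow]
  -- derivatives of esymm
  have hD1 : eval η (pderiv i (esymm (Fin 10) ℂ 1)) = 1 := by
    rw [hN1]; rw [hdp 1]; norm_num
  have hD2 : eval η (pderiv i (esymm (Fin 10) ℂ 2)) = -η i := by
    have h := congrArg (fun q => eval η (pderiv i q)) hN2
    simp only [pderiv_mul, pderiv_ofNat10 i 2, pderiv_ofNat10 i 3, pderiv_ofNat10 i 4, pderiv_ofNat10 i 5, map_sub, map_add, map_mul, map_ofNat,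
      zero_mul, map_zero, hdp, hE1, hE2, hp1, hp2, hD1] at h
    push_cast at h
    linear_combination h / 2
  have hD3 : eval η (pderiv i (esymm (Fin 10) ℂ 3)) = η i ^ 2 - 30 := by
    have h := congrArg (fun q => eval η (pderiv i q)) hN3
    simp only [pderiv_mul, pderiv_ofNat10 i 2, pderiv_ofNat10 i 3, pderiv_ofNat10 i 4, pderiv_ofNat10 i 5, map_sub, map_add, map_mul, map_ofNat,
      zero_mul, map_zero, hdp, hE1, hE2, hp1, hp2, hp3, hD1, hD2] at h
    push_cast at h
    linear_combination h / 3
  have hD4 : eval η (pderiv i (esymm (Fin 10) ℂ 4)) = 30 * η i - 20 - η i ^ 3 := by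
    have h := congrArg (fun q => eval η (pderiv i q)) hN4
    simp only [pderiv_mul, pderiv_ofNat10 i 2, pderiv_ofNat10 i 3, pderiv_ofNat10 i 4, pderiv_ofNat10 i 5, map_sub, map_add, map_mul, map_ofNat,
      zero_mul, map_zero, hdp, hE1, hE2, hE3, hp1, hp2, hp3, hp4, hD1, hD2, hD3] at h
    push_cast at h
    linear_combination h / 4
  have hD5 : eval η (pderiv i (esymm (Fin 10) ℂ 5)) = 345 + 20 * η i - 30 * η i ^ 2 + η i ^ 4 := by
    have h := congrArg (fun q => eval η (pderiv i q)) hN5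
    simp only [pderiv_mul, pderiv_ofNat10 i 2, pderiv_ofNat10 i 3, pderiv_ofNat10 i 4, pderiv_ofNat10 i 5, map_sub, map_add, map_mul, map_ofNat,
      zero_mul, map_zero, hdp, hE1, hE2, hE3, hE4, hp1, hp2, hp3, hp4, hp5, hD1, hD2, hD3, hD4] at h
    push_cast at h
    linear_combination h / 5
  simp only [map_add, pderiv_C_mul, pderiv_mul, map_mul, eval_C, pderiv_C, map_zero, zero_mul,
    hD5, hD2, hD3, hE2, hE3]
  ring

/-- **Case 8.** For `(α, β) ≠ (0, 0)`, the point `η = (2,…,2,−3,−3,−3,−3)` is a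
singular point of the hyperquintic `Q_{(α:β)} = {α·S₅ + β·S₂·S₃ = 0}` in `ℙ⁸(ℂ)` if and only if
`37α + 50β = 0`, i.e. exactly for `(α : β) = (50 : −37)`. -/
theorem case8_singular_iff (α β : ℂ) (hαβ : (α, β) ≠ (0, 0)) (η : Fin 10 → ℂ)
    (hη : η = ![2, 2, 2, 2, 2, 2, -3, -3, -3, -3]) :
    (∃ μ : ℂ, ∀ i, eval η (pderiv i
        (C α * esymm (Fin 10) ℂ 5 + C β * (esymm (Fin 10) ℂ 2 * esymm (Fin 10) ℂ 3))) = μ)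
      ↔ 37 * α + 50 * β = 0 := by
  have e0 : η 0 = 2 := by rw [hη]; rfl
  have e6 : η 6 = -3 := by rw [hη]; rfl
  constructor
  · rintro ⟨μ, hμ⟩
    have h0 := hμ 0
    have h6 := hμ 6
    rw [case8_key α β η hη, e0] at h0
    rw [case8_key α β η hη, e6] at h6
    norm_num at h0 h6
    linear_combination (h0 - h6) / 5
  · intro hcond
    refine ⟨281 * α + 820 * β, fun i => ?_⟩
    rw [case8_key α β η hη]
    have : η i = 2 ∨ η i = -3 := by
      rw [hη]
      fin_cases i <;> first | (left; rfl) | (right; rfl)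
    rcases this with h | h
    · rw [h]; ring
    · rw [h]; linear_combination (-5 : ℂ) * hcond
end

section
/- (Case 22: singular lines of Q_{(3:−2)}) For all a, b ∈ ℂ, the point η := (a,a,a,b,b,b,−a−b,−a−b,−a−b,0) ∈ ℂ^{10} satisfies S_1(η) = 0 and there exists μ ∈ ℂ with (∂F_{3,−2}/∂x_i)(η) = μ for all i = 0,…,9; that is, the hyperquintic Q_{(3:−2)} = {3·S_5 − 2·S_2·S_3 = 0} in ℙ^8(ℂ) is singular along all such points. -/
open MvPolynomial Finset


open MvPolynomial Finset

namespace Case22Aux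

/-- Elementary symmetric value of a list of complex numbers. -/
def el : List ℂ → ℕ → ℂ
  | _, 0 => 1
  | [], _+1 => 0
  | x :: xs, n+1 => x * el xs n + el xs (n+1)

variable {σ : Type*} [DecidableEq σ] [Fintype σ]

lemma sum_powersetCard_toFinset (η : σ → ℂ) :
    ∀ (l : List σ), l.Nodup → ∀ m, ∑ t ∈ l.toFinset.powersetCard m, ∏ i ∈ t, η i
      = el (l.map η) m := by
  intro l
  induction l with
  | nil =>
    intro _ m
    cases m with
    | zero => simp [el]
    | succ m => rw [Finset.powersetCard_eq_empty.mpr (by simp)]; simp [el]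
  | cons x xs ih =>
    intro hnd m
    have hx : x ∉ xs.toFinset := by simpa using (List.nodup_cons.mp hnd).1
    have hxs := (List.nodup_cons.mp hnd).2
    cases m with
    | zero => simp [el]
    | succ m =>
      rw [List.toFinset_cons, Finset.powersetCard_succ_insert hx]
      rw [Finset.sum_union]
      · have h2 : ∑ t ∈ (Finset.powersetCard m xs.toFinset).image (insert x),
            ∏ i ∈ t, η i = η x * el (xs.map η) m := by
          rw [Finset.sum_image]
          · rw [← ih hxs m, Finset.mul_sum]
            refine Finset.sum_congr rfl fun t ht => ?_
            have hxt : x ∉ t := fun h => hx ((Finset.mem_powersetCard.mp ht).1 h)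
            rw [Finset.prod_insert hxt]
          · intro s hs t ht hst
            have hxs' : x ∉ s := fun h => hx ((Finset.mem_powersetCard.mp hs).1 h)
            have hxt' : x ∉ t := fun h => hx ((Finset.mem_powersetCard.mp ht).1 h)
            rw [← Finset.erase_insert hxs', ← Finset.erase_insert hxt', hst]
        rw [h2, ih hxs (m+1), List.map_cons, el]
        ring
      · rw [Finset.disjoint_left]
        intro t ht ht'
        have hxt : x ∉ t := fun h => hx ((Finset.mem_powersetCard.mp ht).1 h)
        obtain ⟨s, hs, rfl⟩ := Finset.mem_image.mp ht'
        exact hxt (Finset.mem_insert_self _ _)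

lemma pderiv_prod_X (j : σ) (t : Finset σ) :
    pderiv j (∏ i ∈ t, (X i : MvPolynomial σ ℂ)) =
      if j ∈ t then ∏ i ∈ t.erase j, X i else 0 := by
  induction t using Finset.induction_on with
  | empty => simp [pderiv_one]
  | @insert x s hx ih =>
    rw [Finset.prod_insert hx, pderiv_mul, ih]
    by_cases hj : j = x
    · subst hj
      simp [pderiv_X_self, hx, Finset.erase_insert hx]
    · rw [pderiv_X_of_ne (Ne.symm hj)]
      by_cases hjs : j ∈ s
      · simp only [hjs, if_true, Finset.mem_insert, or_true, zero_mul, zero_add]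
        rw [Finset.erase_insert_of_ne (fun h => hj h.symm), Finset.prod_insert (fun h => hx (Finset.mem_of_mem_erase h))]
      · simp [hjs, hj]

end Case22Aux

namespace Case22Aux
variable {σ : Type*} [DecidableEq σ] [Fintype σ]

lemma eval_esymm' (η : σ → ℂ) (k : ℕ) :
    eval η (esymm σ ℂ k) = ∑ t ∈ (univ : Finset σ).powersetCard k, ∏ i ∈ t, η i := by
  simp [esymm, map_sum, eval_prod]

lemma eval_pderiv_esymm (η : σ → ℂ) (j : σ) (k : ℕ) :
    eval η (pderiv j (esymm σ ℂ (k+1))) =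
      ∑ t ∈ ((univ : Finset σ).erase j).powersetCard k, ∏ i ∈ t, η i := by
  rw [esymm, map_sum, map_sum]
  simp only [pderiv_prod_X, apply_ite (eval η), map_zero, eval_prod, eval_X]
  rw [show (univ : Finset σ) = insert j (univ.erase j) from
      (Finset.insert_erase (Finset.mem_univ j)).symm,
    Finset.powersetCard_succ_insert (Finset.notMem_erase _ _),
    Finset.erase_insert (Finset.notMem_erase j univ), Finset.sum_union]
  · rw [Finset.sum_image]
    · have h1 : ∑ t ∈ Finset.powersetCard (k+1) (univ.erase j),
          (if j ∈ t then ∏ i ∈ t.erase j, η i else 0) = 0 := by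
        refine Finset.sum_eq_zero fun t ht => ?_
        have : j ∉ t := fun h =>
          Finset.notMem_erase j univ ((Finset.mem_powersetCard.mp ht).1 h)
        simp [this]
      rw [h1, zero_add]
      refine Finset.sum_congr rfl fun t ht => ?_
      have hjt : j ∉ t := fun h =>
        Finset.notMem_erase j univ ((Finset.mem_powersetCard.mp ht).1 h)
      simp [Finset.erase_insert hjt]
    · intro s hs t ht hst
      have hs' : j ∉ s := fun h =>
        Finset.notMem_erase j univ ((Finset.mem_powersetCard.mp hs).1 h)
      have ht' : j ∉ t := fun h =>
        Finset.notMem_erase j univ ((Finset.mem_powersetCard.mp ht).1 h)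
      rw [← Finset.erase_insert hs', ← Finset.erase_insert ht', hst]
  · rw [Finset.disjoint_left]
    intro t ht ht'
    have hjt : j ∉ t := fun h =>
      Finset.notMem_erase j univ ((Finset.mem_powersetCard.mp ht).1 h)
    obtain ⟨s, hs, rfl⟩ := Finset.mem_image.mp ht'
    exact hjt (Finset.mem_insert_self _ _)

end Case22Aux


set_option maxHeartbeats 2000000 in
/-- **Case 22, singular lines of `Q_{(3:−2)}`.** For all `a, b ∈ ℂ`, the point
`η = (a,a,a,b,b,b,−a−b,−a−b,−a−b,0)` satisfies `S₁(η) = 0` and is a singular point of the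
hyperquintic `Q_{(3:−2)} = {3·S₅ − 2·S₂ ·S₃ = 0}` in `ℙ⁸(ℂ)`. -/
theorem case22_singular_lines (a b : ℂ) (η : Fin 10 → ℂ)
    (hη : η = ![a, a, a, b, b, b, -a - b, -a - b, -a - b, 0]) :
    eval η (esymm (Fin 10) ℂ 1) = 0 ∧
    ∃ μ : ℂ, ∀ i, eval η (pderiv i
      (C (3 : ℂ) * esymm (Fin 10) ℂ 5
        + C (-2 : ℂ) * (esymm (Fin 10) ℂ 2 * esymm (Fin 10) ℂ 3))) = μ := by
  have hE : ∀ k, eval η (esymm (Fin 10) ℂ k)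
      = Case22Aux.el (List.map η [0, 1, 2, 3, 4, 5, 6, 7, 8, 9]) k := by
    intro k
    rw [Case22Aux.eval_esymm',
      show (univ : Finset (Fin 10)) = ([0, 1, 2, 3, 4, 5, 6, 7, 8, 9] : List (Fin 10)).toFinset by decide]
    exact Case22Aux.sum_powersetCard_toFinset η _ (by decide) k
  have hD : ∀ (j : Fin 10) (l : List (Fin 10)), univ.erase j = l.toFinset → l.Nodup → ∀ k,
      eval η (pderiv j (esymm (Fin 10) ℂ (k+1))) = Case22Aux.el (l.map η) k := by
    intro j l h hl k
    rw [Case22Aux.eval_pderiv_esymm, h]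
    exact Case22Aux.sum_powersetCard_toFinset η _ hl k
  have hF : ∀ (j : Fin 10) (l : List (Fin 10)), univ.erase j = l.toFinset → l.Nodup →
      eval η (pderiv j
        (C (3 : ℂ) * esymm (Fin 10) ℂ 5
          + C (-2 : ℂ) * (esymm (Fin 10) ℂ 2 * esymm (Fin 10) ℂ 3)))
      = 3 * Case22Aux.el (l.map η) 4 + (-2) * (Case22Aux.el (l.map η) 1 * Case22Aux.el (List.map η [0, 1, 2, 3, 4, 5, 6, 7, 8, 9]) 3
          + Case22Aux.el (List.map η [0, 1, 2, 3, 4, 5, 6, 7, 8, 9]) 2 * Case22Aux.el (l.map η) 2) := by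
    intro j l h hl
    have h5 := hD j l h hl 4
    have h2 := hD j l h hl 1
    have h3 := hD j l h hl 2
    norm_num at h5 h2 h3
    rw [map_add, pderiv_C_mul, pderiv_C_mul, pderiv_mul, eval_add, eval_mul, eval_mul,
      eval_C, eval_C, eval_add, eval_mul, eval_mul, h5, h2, h3, hE 2, hE 3]
  have hfull : List.map η [0, 1, 2, 3, 4, 5, 6, 7, 8, 9] = [a, a, a, b, b, b, -a - b, -a - b, -a - b, 0] := by subst hη; rfl
  constructor
  · rw [hE 1, hfull]
    simp only [Case22Aux.el]
    ring
  · refine ⟨3 * Case22Aux.el [a, a, a, b, b, b, -a - b, -a - b, -a - b] 4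
      + (-2) * (Case22Aux.el [a, a, a, b, b, b, -a - b, -a - b, -a - b] 1 * Case22Aux.el [a, a, a, b, b, b, -a - b, -a - b, -a - b, 0] 3
        + Case22Aux.el [a, a, a, b, b, b, -a - b, -a - b, -a - b, 0] 2 * Case22Aux.el [a, a, a, b, b, b, -a - b, -a - b, -a - b] 2), ?_⟩
    intro i
    fin_cases i
    · refine (hF 0 [1, 2, 3, 4, 5, 6, 7, 8, 9] (by decide) (by decide)).trans ?_
      rw [show List.map η [1, 2, 3, 4, 5, 6, 7, 8, 9] = [a, a, b, b, b, -a - b, -a - b, -a - b, 0] from by subst hη; rfl, hfull]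
      simp only [Case22Aux.el]
      ring
    · refine (hF 1 [0, 2, 3, 4, 5, 6, 7, 8, 9] (by decide) (by decide)).trans ?_
      rw [show List.map η [0, 2, 3, 4, 5, 6, 7, 8, 9] = [a, a, b, b, b, -a - b, -a - b, -a - b, 0] from by subst hη; rfl, hfull]
      simp only [Case22Aux.el]
      ring
    · refine (hF 2 [0, 1, 3, 4, 5, 6, 7, 8, 9] (by decide) (by decide)).trans ?_
      rw [show List.map η [0, 1, 3, 4, 5, 6, 7, 8, 9] = [a, a, b, b, b, -a - b, -a - b, -a - b, 0] from by subst hη; rfl, hfull]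
      simp only [Case22Aux.el]
      ring
    · refine (hF 3 [0, 1, 2, 4, 5, 6, 7, 8, 9] (by decide) (by decide)).trans ?_
      rw [show List.map η [0, 1, 2, 4, 5, 6, 7, 8, 9] = [a, a, a, b, b, -a - b, -a - b, -a - b, 0] from by subst hη; rfl, hfull]
      simp only [Case22Aux.el]
      ring
    · refine (hF 4 [0, 1, 2, 3, 5, 6, 7, 8, 9] (by decide) (by decide)).trans ?_
      rw [show List.map η [0, 1, 2, 3, 5, 6, 7, 8, 9] = [a, a, a, b, b, -a - b, -a - b, -a - b, 0] from by subst hη; rfl, hfull]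
      simp only [Case22Aux.el]
      ring
    · refine (hF 5 [0, 1, 2, 3, 4, 6, 7, 8, 9] (by decide) (by decide)).trans ?_
      rw [show List.map η [0, 1, 2, 3, 4, 6, 7, 8, 9] = [a, a, a, b, b, -a - b, -a - b, -a - b, 0] from by subst hη; rfl, hfull]
      simp only [Case22Aux.el]
      ring
    · refine (hF 6 [0, 1, 2, 3, 4, 5, 7, 8, 9] (by decide) (by decide)).trans ?_
      rw [show List.map η [0, 1, 2, 3, 4, 5, 7, 8, 9] = [a, a, a, b, b, b, -a - b, -a - b, 0] from by subst hη; rfl, hfull]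
      simp only [Case22Aux.el]
      ring
    · refine (hF 7 [0, 1, 2, 3, 4, 5, 6, 8, 9] (by decide) (by decide)).trans ?_
      rw [show List.map η [0, 1, 2, 3, 4, 5, 6, 8, 9] = [a, a, a, b, b, b, -a - b, -a - b, 0] from by subst hη; rfl, hfull]
      simp only [Case22Aux.el]
      ring
    · refine (hF 8 [0, 1, 2, 3, 4, 5, 6, 7, 9] (by decide) (by decide)).trans ?_
      rw [show List.map η [0, 1, 2, 3, 4, 5, 6, 7, 9] = [a, a, a, b, b, b, -a - b, -a - b, 0] from by subst hη; rfl, hfull]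
      simp only [Case22Aux.el]
      ring
    · refine (hF 9 [0, 1, 2, 3, 4, 5, 6, 7, 8] (by decide) (by decide)).trans ?_
      rw [show List.map η [0, 1, 2, 3, 4, 5, 6, 7, 8] = [a, a, a, b, b, b, -a - b, -a - b, -a - b] from by subst hη; rfl, hfull]
end
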